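/- If F is a CNF over V, P ⊆ V, and the set of projected cubes of size 1 (full assignments over P extendible to models of F) is partitioned by a finite family of pairwise disjoint projected cubes S1,...,Sk (each Si a consistent literal set over P, every P-assignment extending Si extendible to a model, and every extendible P-assignment extends exactly one Si), then ct(F,P) = Σ_i 2^(|P| − |Si|). -/

import Mathlib

abbrev Var := ℕ

abbrev Assg (V : Finset Var) := {x // x ∈ V} → Bool

def extAssg (V : Finset Var) (g : Assg V) : Var → Bool :=
  fun x => if h : x ∈ V then g ⟨x, h⟩ else false

def dependsOn (F : (Var → Bool) → Bool) (V : Finset Var) : Prop :=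
  ∀ σ τ : Var → Bool, (∀ x ∈ V, σ x = τ x) → F σ = F τ

def models (F : (Var → Bool) → Bool) (V : Finset Var) : Finset (Assg V) :=
  Finset.univ.filter (fun g => F (extAssg V g) = true)

def ct (F : (Var → Bool) → Bool) (V : Finset Var) : ℕ := (models F V).card

def restrictAssg {V P : Finset Var} (h : P ⊆ V) (g : Assg V) : Assg P :=
  fun x => g ⟨x.1, h x.2⟩

def projCt (F : (Var → Bool) → Bool) (V P : Finset Var) (h : P ⊆ V) : ℕ :=
  ((models F V).image (restrictAssg h)).card

abbrev Lit := Var × Bool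
abbrev Clause := Finset Lit
abbrev CNF := Finset Clause

def clauseSat (σ : Var → Bool) (C : Clause) : Prop := ∃ l ∈ C, σ l.1 = l.2

instance (σ : Var → Bool) (C : Clause) : Decidable (clauseSat σ C) := by
  unfold clauseSat; infer_instance

def cnfSat (σ : Var → Bool) (F : CNF) : Prop := ∀ C ∈ F, clauseSat σ C

instance (σ : Var → Bool) (F : CNF) : Decidable (cnfSat σ F) := by
  unfold cnfSat; infer_instance

def cnfModels (F : CNF) (V : Finset Var) : Finset (Assg V) :=
  Finset.univ.filter (fun g => cnfSat (extAssg V g) F)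

def cnfCt (F : CNF) (V : Finset Var) : ℕ := (cnfModels F V).card

def cnfProjCt (F : CNF) (V P : Finset Var) (h : P ⊆ V) : ℕ :=
  ((cnfModels F V).image (restrictAssg h)).card

def cnfVars (F : CNF) : Finset Var := F.biUnion (fun C => C.image Prod.fst)

def consistent (θ : Finset Lit) : Prop := ∀ v : Var, ¬((v, true) ∈ θ ∧ (v, false) ∈ θ)

def extendsL (θ : Finset Lit) {V : Finset Var} (g : Assg V) : Prop :=
  ∀ l ∈ θ, extAssg V g l.1 = l.2

instance (θ : Finset Lit) (V : Finset Var) (g : Assg V) : Decidable (extendsL θ g) := by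
  unfold extendsL; infer_instance

def negLit (l : Lit) : Lit := (l.1, !l.2)

def residualCNF (F : CNF) (θ : Finset Lit) : CNF :=
  (F.filter (fun C => ∀ l ∈ C, l ∉ θ)).image (fun C => C.filter (fun l => negLit l ∉ θ))

lemma extAssg_mem {P : Finset Var} (h : Assg P) {v : Var} (hv : v ∈ P) :
    extAssg P h v = h ⟨v, hv⟩ := dif_pos hv

lemma consistent_injOn {θ : Finset Lit} (hc : consistent θ) :
    Set.InjOn Prod.fst (θ : Set Lit) := by
  rintro ⟨v1, b1⟩ h1 ⟨v2, b2⟩ h2 he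
  simp only at he
  subst he
  cases b1 <;> cases b2
  · rfl
  · exact absurd ⟨h2, h1⟩ (hc v1)
  · exact absurd ⟨h1, h2⟩ (hc v1)
  · rfl

lemma count_ext (P : Finset Var) (θ : Finset Lit)
    (hθP : ∀ l ∈ θ, l.1 ∈ P) (hcons : consistent θ) :
    (Finset.univ.filter (fun h : Assg P => extendsL θ h)).card
      = 2 ^ (P.card - θ.card) := by
  classical
  set Q := θ.image Prod.fst with hQ
  have hQP : Q ⊆ P := by
    intro v hv
    simp only [hQ, Finset.mem_image] at hv
    obtain ⟨l, hl, rfl⟩ := hv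
    exact hθP l hl
  have hQcard : Q.card = θ.card :=
    Finset.card_image_of_injOn (consistent_injOn hcons)
  have hrhs : (Finset.univ : Finset (Assg (P \ Q))).card = 2 ^ (P.card - θ.card) := by
    rw [Finset.card_univ, Fintype.card_fun, Fintype.card_bool, Fintype.card_coe,
      Finset.card_sdiff_of_subset hQP, hQcard]
  rw [← hrhs]
  apply Finset.card_nbij'
    (fun h => fun x => h ⟨x.1, Finset.sdiff_subset x.2⟩)
    (fun f => fun x => if hx : x.1 ∈ Q then decide ((x.1, true) ∈ θ)
      else f ⟨x.1, Finset.mem_sdiff.mpr ⟨x.2, hx⟩⟩)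
  · intro h _; exact Finset.mem_univ _
  · intro f _
    simp only [Finset.mem_coe, Finset.mem_filter, Finset.mem_univ, true_and]
    intro l hl
    have hlQ : l.1 ∈ Q := Finset.mem_image_of_mem _ hl
    rw [extAssg_mem _ (hθP l hl)]
    simp only [dif_pos hlQ]
    cases hb : l.2
    · have : (l.1, true) ∉ θ := by
        intro hmem
        exact hcons l.1 ⟨hmem, by rw [← hb]; exact hl⟩
      simp [this]
    · have : (l.1, true) ∈ θ := by rw [← hb]; exact hl
      simp [this]
  · intro h hh
    simp only [Finset.mem_coe, Finset.mem_filter, Finset.mem_univ, true_and] at hh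
    funext x
    by_cases hx : x.1 ∈ Q
    · simp only [dif_pos hx]
      obtain ⟨l, hl, hfst⟩ := Finset.mem_image.mp hx
      have := hh l hl
      rw [extAssg_mem _ (hθP l hl)] at this
      cases hb : l.2
      · have h1 : (l.1, true) ∉ θ := by
          intro hmem
          exact hcons l.1 ⟨hmem, by rw [← hb]; exact hl⟩
        rw [hfst] at h1
        simp only [h1, decide_eq_false_iff_not]
        rw [hb] at this
        have : h ⟨l.1, hθP l hl⟩ = false := this
        cases x with
        | mk xv xp =>
          simp only at hfst
          subst hfst
          simpa using this
      · have h1 : (l.1, true) ∈ θ := by rw [← hb]; exact hl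
        rw [hfst] at h1
        simp only [h1, decide_eq_true_eq]
        rw [hb] at this
        cases x with
        | mk xv xp =>
          simp only at hfst
          subst hfst
          simpa using this
    · simp only [dif_neg hx]
  · intro f _
    funext x
    have hx : x.1 ∉ Q := (Finset.mem_sdiff.mp x.2).2
    simp only [dif_neg hx]

theorem stmt18 (F : CNF) (V P : Finset Var) (hPV : P ⊆ V)
    (k : ℕ) (S : Fin k → Finset Lit)
    (hSP : ∀ i, ∀ l ∈ S i, l.1 ∈ P) (hScons : ∀ i, consistent (S i))
    (hcover : ∀ i, ∀ h : Assg P, extendsL (S i) h →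
      ∃ g ∈ cnfModels F V, restrictAssg hPV g = h)
    (hpart : ∀ h : Assg P, (∃ g ∈ cnfModels F V, restrictAssg hPV g = h) →
      ∃! i, extendsL (S i) h) :
    cnfProjCt F V P hPV = ∑ i, 2 ^ (P.card - (S i).card) := by
  classical
  have hT : (cnfModels F V).image (restrictAssg hPV)
      = Finset.univ.filter (fun h : Assg P => ∃ i, extendsL (S i) h) := by
    ext h
    simp only [Finset.mem_image, Finset.mem_filter, Finset.mem_univ, true_and]
    constructor
    · rintro ⟨g, hg, rfl⟩
      obtain ⟨i, hi, -⟩ := hpart _ ⟨g, hg, rfl⟩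
      exact ⟨i, hi⟩
    · rintro ⟨i, hi⟩
      obtain ⟨g, hg, hgr⟩ := hcover i h hi
      exact ⟨g, hg, hgr⟩
  have hbU : Finset.univ.filter (fun h : Assg P => ∃ i, extendsL (S i) h)
      = Finset.univ.biUnion
        (fun i => Finset.univ.filter (fun h : Assg P => extendsL (S i) h)) := by
    ext h; simp
  unfold cnfProjCt
  rw [hT, hbU, Finset.card_biUnion]
  · exact Finset.sum_congr rfl fun i _ => count_ext P (S i) (hSP i) (hScons i)
  · intro i _ j _ hij
    simp only [Finset.disjoint_left, Finset.mem_filter, Finset.mem_univ, true_and]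
    intro h hi hj
    obtain ⟨g, hg, hgr⟩ := hcover i h hi
    obtain ⟨w, -, hw⟩ := hpart h ⟨g, hg, hgr⟩
    exact hij ((hw i hi).trans (hw j hj).symm)
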